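/- Let p > q > 1 be coprime integers with negative continued fraction expansion p/q = [a_1,...,a_l] (each a_i ≥ 2). Then length(p/q) + length(p/(p-q)) = 1 + Σ_{i=1}^{l}(a_i - 1), where length denotes the number of terms in the negative continued fraction expansion with all entries ≥ 2. -/

import Mathlib

/-- Value of a negative continued fraction `[a₁, a₂, …, aₗ] = a₁ - 1/(a₂ - 1/(… - 1/aₗ))`. -/
def ncf : List ℚ → ℚ
  | [] => 0
  | a :: l => a - (ncf l)⁻¹

lemma map_cast_cons (a : ℕ) (t : List ℕ) :
    (a::t).map (fun a => (a:ℚ)) = ((a:ℚ)) :: t.map (fun a => (a:ℚ)) := rfl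
lemma map_cast_nil : ([] : List ℕ).map (fun a => (a:ℚ)) = [] := rfl
@[simp] lemma ncf_nil : ncf [] = 0 := rfl
@[simp] lemma ncf_cons (x : ℚ) (l : List ℚ) : ncf (x :: l) = x - (ncf l)⁻¹ := rfl

lemma ncf_gt_one (L : List ℕ) (hne : L ≠ []) (h2 : ∀ a ∈ L, 2 ≤ a) :
    1 < ncf (L.map (fun a => (a : ℚ))) := by
  induction L with
  | nil => simp at hne
  | cons a t ih =>
    have ha : 2 ≤ a := h2 a (by simp)
    rcases eq_or_ne t [] with rfl | hte
    · rw [map_cast_cons, map_cast_nil, ncf_cons, ncf_nil]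
      have : (2:ℚ) ≤ (a:ℚ) := by exact_mod_cast ha
      norm_num
      linarith
    · have ht := ih hte (fun b hb => h2 b (by simp [hb]))
      have h1 : (0:ℚ) < (ncf (t.map (fun a => (a : ℚ))))⁻¹ := by positivity
      have h2' : (ncf (t.map (fun a => (a : ℚ))))⁻¹ < 1 := by
        rw [inv_lt_one_iff₀]; right; exact ht
      have : (2:ℚ) ≤ (a:ℚ) := by exact_mod_cast ha
      rw [map_cast_cons, ncf_cons]
      linarith

lemma ncf_unique (K : List ℕ) : ∀ (K' : List ℕ), (∀ a ∈ K, 2 ≤ a) → (∀ a ∈ K', 2 ≤ a) →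
    ncf (K.map (fun a => (a : ℚ))) = ncf (K'.map (fun a => (a : ℚ))) → K = K' := by
  induction K with
  | nil =>
    intro K' _ h2' h
    rcases K' with _ | ⟨a, t⟩
    · rfl
    · exfalso
      have := ncf_gt_one (a :: t) (by simp) h2'
      rw [map_cast_nil, ncf_nil, map_cast_cons, ncf_cons] at h
      rw [map_cast_cons, ncf_cons, ← h] at this
      norm_num at this
  | cons a t ih =>
    intro K' h2 h2' h
    rcases K' with _ | ⟨a', t'⟩
    · exfalso
      have := ncf_gt_one (a :: t) (by simp) h2
      rw [map_cast_nil, ncf_nil, map_cast_cons, ncf_cons] at h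
      rw [map_cast_cons, ncf_cons, h] at this
      norm_num at this
    · -- both nonempty
      have hx : (ncf (t.map (fun a => (a : ℚ))))⁻¹ = 0 ∨
          (0 < (ncf (t.map (fun a => (a : ℚ))))⁻¹ ∧ (ncf (t.map (fun a => (a : ℚ))))⁻¹ < 1) := by
        rcases eq_or_ne t [] with rfl | hte
        · left; rw [map_cast_nil, ncf_nil]; simp
        · right
          have := ncf_gt_one t hte (fun b hb => h2 b (by simp [hb]))
          constructor
          · positivity
          · rw [inv_lt_one_iff₀]; right; exact this
      have hx' : (ncf (t'.map (fun a => (a : ℚ))))⁻¹ = 0 ∨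
          (0 < (ncf (t'.map (fun a => (a : ℚ))))⁻¹ ∧ (ncf (t'.map (fun a => (a : ℚ))))⁻¹ < 1) := by
        rcases eq_or_ne t' [] with rfl | hte
        · left; rw [map_cast_nil, ncf_nil]; simp
        · right
          have := ncf_gt_one t' hte (fun b hb => h2' b (by simp [hb]))
          constructor
          · positivity
          · rw [inv_lt_one_iff₀]; right; exact this
      rw [map_cast_cons, map_cast_cons, ncf_cons, ncf_cons] at h
      have hxb : 0 ≤ (ncf (t.map (fun a => (a : ℚ))))⁻¹ ∧
          (ncf (t.map (fun a => (a : ℚ))))⁻¹ < 1 := by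
        rcases hx with h0 | ⟨hp, hl⟩
        · rw [h0]; norm_num
        · exact ⟨le_of_lt hp, hl⟩
      have hxb' : 0 ≤ (ncf (t'.map (fun a => (a : ℚ))))⁻¹ ∧
          (ncf (t'.map (fun a => (a : ℚ))))⁻¹ < 1 := by
        rcases hx' with h0 | ⟨hp, hl⟩
        · rw [h0]; norm_num
        · exact ⟨le_of_lt hp, hl⟩
      have haa : a = a' := by
        have h1 : ((a:ℚ) - a' : ℚ) = (ncf (t.map (fun a => (a : ℚ))))⁻¹ -
            (ncf (t'.map (fun a => (a : ℚ))))⁻¹ := by linarith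
        have hb1 : ((a:ℚ) - a') < 1 := by rw [h1]; linarith [hxb.1, hxb.2, hxb'.1, hxb'.2]
        have hb2 : -1 < ((a:ℚ) - a') := by rw [h1]; linarith [hxb.1, hxb.2, hxb'.1, hxb'.2]
        have hq1 : ((a:ℚ)) < (a':ℚ) + 1 := by linarith
        have hq2 : ((a':ℚ)) < (a:ℚ) + 1 := by linarith
        have hn1 : a < a' + 1 := by exact_mod_cast hq1
        have hn2 : a' < a + 1 := by exact_mod_cast hq2
        omega
      subst haa
      have hinv : (ncf (t.map (fun a => (a : ℚ))))⁻¹ = (ncf (t'.map (fun a => (a : ℚ))))⁻¹ := by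
        linarith
      have htt : t = t' := by
        rcases hx with h0 | ⟨hp, _⟩
        · rcases hx' with h0' | ⟨hp', _⟩
          · -- both inverses zero: both tails empty
            rcases eq_or_ne t [] with rfl | hte
            · rcases eq_or_ne t' [] with rfl | hte'
              · rfl
              · exfalso
                have := ncf_gt_one t' hte' (fun b hb => h2' b (by simp [hb]))
                rw [inv_eq_zero] at h0'
                rw [h0'] at this; norm_num at this
            · exfalso
              have := ncf_gt_one t hte (fun b hb => h2 b (by simp [hb]))
              rw [inv_eq_zero] at h0
              rw [h0] at this; norm_num at this
          · exfalso; rw [hinv] at h0; linarith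
        · rcases hx' with h0' | ⟨hp', _⟩
          · exfalso; rw [← hinv] at h0'; linarith
          · have hne : ncf (t.map (fun a => (a : ℚ))) ≠ 0 := by
              intro hc; rw [hc] at hp; simp at hp
            have hne' : ncf (t'.map (fun a => (a : ℚ))) ≠ 0 := by
              intro hc; rw [hc] at hp'; simp at hp'
            have := inv_injective hinv
            exact ih t' (fun b hb => h2 b (by simp [hb])) (fun b hb => h2' b (by simp [hb])) this
      rw [htt]

def inc : List ℕ → List ℕ
  | [] => []
  | a :: t => (a + 1) :: t

def dual : List ℕ → List ℕ
  | [] => []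
  | [a] => List.replicate (a - 1) 2
  | (a + 3) :: b :: rest => 2 :: dual ((a + 2) :: b :: rest)
  | 0 :: b :: rest => inc (dual (b :: rest))
  | 1 :: b :: rest => inc (dual (b :: rest))
  | 2 :: b :: rest => inc (dual (b :: rest))
termination_by l => l.sum + l.length
decreasing_by all_goals (simp [List.sum_cons]; try omega)

lemma inc_length (K : List ℕ) : (inc K).length = K.length := by
  cases K <;> simp [inc]

lemma dual_length (L : List ℕ) (hne : L ≠ []) (h2 : ∀ a ∈ L, 2 ≤ a) :
    L.length + (dual L).length = 1 + (L.map (fun a => a - 1)).sum := by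
  induction L using dual.induct with
  | case1 => simp at hne
  | case2 a =>
    have ha := h2 a (by simp)
    simp [dual]
  | case3 a b rest ih =>
    have ih' := ih (by simp) (by
      intro c hc
      rcases List.mem_cons.1 hc with rfl | hc
      · omega
      · exact h2 c (by simp [hc]))
    simp only [dual, List.length_cons, List.map_cons, List.sum_cons] at ih' ⊢
    omega
  | case4 b rest ih => exact absurd (h2 0 (by simp)) (by omega)
  | case5 b rest ih => exact absurd (h2 1 (by simp)) (by omega)
  | case6 b rest ih =>
    have ih' := ih (by simp) (by intro c hc; exact h2 c (by simp [hc]))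
    simp only [dual, List.length_cons, List.map_cons, List.sum_cons, inc_length] at ih' ⊢
    omega

lemma rep_cast (n : ℕ) :
    ((List.replicate n 2 : List ℕ)).map (fun a => (a:ℚ)) = List.replicate n (2:ℚ) := by
  induction n with
  | zero => rfl
  | succ n ih =>
    rw [List.replicate_succ, map_cast_cons, ih, List.replicate_succ]
    norm_num

lemma ncf_replicate (n : ℕ) (h : 1 ≤ n) :
    ncf (List.replicate n (2:ℚ)) = ((n:ℚ)+1)/(n:ℚ) := by
  induction n with
  | zero => omega
  | succ n ih =>
    rcases Nat.eq_zero_or_pos n with rfl | hn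
    · rw [List.replicate_succ, List.replicate_zero, ncf_cons, ncf_nil]
      norm_num
    · rw [List.replicate_succ, ncf_cons, ih hn]
      have h1 : ((n:ℚ)) ≠ 0 := by positivity
      have h2 : ((n:ℚ)) + 1 ≠ 0 := by positivity
      push_cast
      field_simp
      ring

lemma ncf_inc (K : List ℕ) (hne : K ≠ []) :
    ncf ((inc K).map (fun a => (a:ℚ))) = ncf (K.map (fun a => (a:ℚ))) + 1 := by
  rcases K with _ | ⟨a, t⟩
  · simp at hne
  · show ncf (((a+1) :: t).map (fun a => (a:ℚ))) = _
    rw [map_cast_cons, ncf_cons, map_cast_cons, ncf_cons]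
    push_cast
    ring

lemma dual_spec (L : List ℕ) (hne : L ≠ []) (h2 : ∀ a ∈ L, 2 ≤ a) :
    dual L ≠ [] ∧ (∀ b ∈ dual L, 2 ≤ b) ∧
    ncf ((dual L).map (fun a => (a : ℚ))) =
      ncf (L.map (fun a => (a : ℚ))) / (ncf (L.map (fun a => (a : ℚ))) - 1) := by
  induction L using dual.induct with
  | case1 => simp at hne
  | case2 a =>
    have ha := h2 a (by simp)
    have ha1 : 1 ≤ a - 1 := by omega
    refine ⟨by simp [dual]; omega, by intro b hb; simp [dual] at hb; omega, ?_⟩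
    rw [show dual [a] = List.replicate (a-1) 2 from by rw [dual], rep_cast,
      ncf_replicate _ ha1, map_cast_cons, map_cast_nil, ncf_cons, ncf_nil]
    have hc : ((a - 1 : ℕ) : ℚ) = (a:ℚ) - 1 := by
      push_cast [Nat.cast_sub (show 1 ≤ a by omega)]
      ring
    rw [hc]
    norm_num
  | case3 a b rest ih =>
    have h2' : ∀ c ∈ (a+2) :: b :: rest, 2 ≤ c := by
      intro c hc
      rcases List.mem_cons.1 hc with rfl | hc
      · omega
      · exact h2 c (by simp [hc])
    obtain ⟨hne', hmem', hval'⟩ := ih (by simp) h2'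
    have hgt : 1 < ncf (((a+2) :: b :: rest).map (fun a => (a:ℚ))) :=
      ncf_gt_one _ (by simp) h2'
    have hd : dual ((a+3) :: b :: rest) = 2 :: dual ((a+2) :: b :: rest) := by
      simp only [dual]
    refine ⟨?_, ?_, ?_⟩
    · show dual ((a+3) :: b :: rest) ≠ []
      rw [hd]
      simp
    · show ∀ c ∈ dual ((a+3) :: b :: rest), 2 ≤ c
      intro c hc
      rw [hd] at hc
      rcases List.mem_cons.1 hc with rfl | hc
      · exact le_refl 2
      · exact hmem' c hc
    · show ncf ((dual ((a+3) :: b :: rest)).map (fun a => (a : ℚ))) =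
        ncf (((a+3) :: b :: rest).map (fun a => (a : ℚ))) /
          (ncf (((a+3) :: b :: rest).map (fun a => (a : ℚ))) - 1)
      set v' := ncf (((a+2) :: b :: rest).map (fun a => (a:ℚ))) with hv'
      have hcur : ncf (((a+3) :: b :: rest).map (fun a => (a:ℚ))) = v' + 1 := by
        rw [hv', map_cast_cons (a+3) (b::rest), map_cast_cons (a+2) (b::rest),
          ncf_cons, ncf_cons]
        push_cast
        ring
      rw [hd, map_cast_cons, ncf_cons, hval', hcur]
      have h1 : v' ≠ 0 := by intro hc; rw [hc] at hgt; norm_num at hgt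
      have h2'' : v' - 1 ≠ 0 := by
        intro hc
        have : v' = 1 := by linarith
        rw [this] at hgt
        norm_num at hgt
      field_simp
      ring_nf
      rw [mul_inv_cancel₀ h1, pow_two, mul_assoc, mul_inv_cancel₀ h1]
      ring
  | case4 b rest ih => exact absurd (h2 0 (by simp)) (by omega)
  | case5 b rest ih => exact absurd (h2 1 (by simp)) (by omega)
  | case6 b rest ih =>
    have h2' : ∀ c ∈ b :: rest, 2 ≤ c := fun c hc => h2 c (by simp [hc])
    obtain ⟨hne', hmem', hval'⟩ := ih (by simp) h2'
    have hgt : 1 < ncf ((b :: rest).map (fun a => (a:ℚ))) := ncf_gt_one _ (by simp) h2'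
    set w := ncf ((b :: rest).map (fun a => (a:ℚ))) with hw
    have hd : dual (2 :: b :: rest) = inc (dual (b :: rest)) := by rw [dual]
    have h1 : w ≠ 0 := by intro hc; rw [hc] at hgt; norm_num at hgt
    have h2'' : w - 1 ≠ 0 := by
      intro hc
      have : w = 1 := by linarith
      rw [this] at hgt
      norm_num at hgt
    refine ⟨?_, ?_, ?_⟩
    · rw [hd]
      rcases hd' : dual (b :: rest) with _ | ⟨c, t⟩
      · exact absurd hd' hne'
      · simp [inc]
    · intro c hc
      rw [hd] at hc
      rcases hd' : dual (b :: rest) with _ | ⟨c', t⟩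
      · exact absurd hd' hne'
      · rw [hd'] at hc
        simp only [inc, List.mem_cons] at hc
        rcases hc with rfl | hc
        · have := hmem' c' (by rw [hd']; simp)
          omega
        · exact hmem' c (by rw [hd']; simp [hc])
    · rw [hd, ncf_inc _ hne', hval']
      have hcur : ncf ((2 :: b :: rest).map (fun a => (a:ℚ))) = 2 - w⁻¹ := by
        rw [map_cast_cons, ncf_cons, ← hw]
        norm_num
      rw [hcur]
      have h3 : (2:ℚ) - w⁻¹ - 1 ≠ 0 := by
        have hinv : w⁻¹ < 1 := by rw [inv_lt_one_iff₀]; right; exact hgt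
        have hp : 0 < w⁻¹ := by positivity
        intro hc
        have : w⁻¹ = 1 := by linarith
        rw [this] at hinv
        norm_num at hinv
      have e1 : (2:ℚ) - w⁻¹ = (2*w-1)/w := by
        field_simp
      have e2 : (2:ℚ) - w⁻¹ - 1 = (w-1)/w := by
        field_simp
        ring
      have e3 : ((2*w-1)/w) / ((w-1)/w) = (2*w-1)/(w-1) := by
        rw [div_div_div_cancel_right₀]
        exact h1
      rw [e2, e1, e3]
      rw [div_add' _ _ _ h2'']
      ring_nf

theorem stmt0 (p q : ℕ) (hq : 1 < q) (hpq : q < p) (hcop : Nat.Coprime p q)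
    (L M : List ℕ)
    (hL2 : ∀ a ∈ L, 2 ≤ a) (hM2 : ∀ a ∈ M, 2 ≤ a)
    (hL : ncf (L.map (fun a => (a : ℚ))) = (p : ℚ) / (q : ℚ))
    (hM : ncf (M.map (fun a => (a : ℚ))) = (p : ℚ) / ((p : ℚ) - (q : ℚ))) :
    L.length + M.length = 1 + (L.map (fun a => a - 1)).sum := by
  have hq0 : ((q:ℚ)) ≠ 0 := by positivity
  have hpq' : ((q:ℚ)) < (p:ℚ) := by exact_mod_cast hpq
  have hpmq : ((p:ℚ)) - (q:ℚ) ≠ 0 := by linarith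
  have hLne : L ≠ [] := by
    intro hc
    subst hc
    rw [map_cast_nil, ncf_nil] at hL
    have hp1 : (0:ℚ) < (p:ℚ) := by exact_mod_cast (show 0 < p by omega)
    have hq1 : (0:ℚ) < (q:ℚ) := by exact_mod_cast (show 0 < q by omega)
    have hp0 : (0:ℚ) < (p:ℚ)/(q:ℚ) := div_pos hp1 hq1
    rw [← hL] at hp0
    norm_num at hp0
  obtain ⟨hdne, hdmem, hdval⟩ := dual_spec L hLne hL2
  have hv : ncf (L.map (fun a => (a : ℚ))) = (p:ℚ)/(q:ℚ) := hL
  have heq : ncf ((dual L).map (fun a => (a : ℚ))) = ncf (M.map (fun a => (a : ℚ))) := by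
    rw [hdval, hv, hM]
    have h1 : (p:ℚ)/(q:ℚ) - 1 = ((p:ℚ)-(q:ℚ))/(q:ℚ) := by field_simp
    rw [h1, div_div_div_cancel_right₀]
    exact hq0
  have hMeq : M = dual L := ncf_unique M (dual L) hM2 hdmem heq.symm
  have := dual_length L hLne hL2
  rw [hMeq]
  omega
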